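/- Let X be a finite graph and Y ⊆ X a subset of its vertex set. For a subset J of the vertices, let J° = {i ∈ J : i has no neighbors in X − J} denote the interior of J, and let A(Y,X) be the set of subsets J ⊆ X such that no connected component of X − J is entirely contained in Y. Then, in the polynomial ring ℤ[q], one has ∑_{J ∈ A(Y,X)} (q−1)^{#(J − (Y ∩ J°))} · q^{#(Y ∩ J°)} = q^{#X}. -/
import Mathlib

namespace Stmt0Aux

set_option linter.unusedSectionVars false
set_option linter.unusedVariables false

open Classical Finset Polynomial

variable {V : Type*} [Fintype V] [DecidableEq V] (G : SimpleGraph V) (Y : Finset V)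

/-- `B J = Y ∩ J°`, where `J°` is the interior of `J`. -/
noncomputable def Bset (J : Finset V) : Finset V :=
  Y ∩ J.filter fun i => ∀ j, G.Adj i j → j ∈ J

/-- Vertices lying in a connected component of `X − S` entirely contained in `Y`. -/
noncomputable def Dset (S : Finset V) : Finset V :=
  Finset.univ.filter (fun v => ∃ h : v ∈ {x : V | x ∉ S},
    ∀ w : {x : V | x ∉ S}, (G.induce {x : V | x ∉ S}).Reachable ⟨v, h⟩ w → (w : V) ∈ Y)

noncomputable def Phi (S : Finset V) : Finset V := S ∪ Dset G Y S

def Amem (J : Finset V) : Prop :=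
  ∀ C : (G.induce {v : V | v ∉ J}).ConnectedComponent,
    ¬ ∀ v ∈ C.supp, (↑v : V) ∈ Y

lemma Bset_subset (J : Finset V) : Bset G Y J ⊆ J := by
  intro x hx
  simp only [Bset, mem_inter, mem_filter] at hx
  exact hx.2.1

lemma mem_Bset {J : Finset V} {v : V} :
    v ∈ Bset G Y J ↔ v ∈ Y ∧ v ∈ J ∧ ∀ j, G.Adj v j → j ∈ J := by
  simp [Bset, and_assoc]

lemma mem_Dset {S : Finset V} {v : V} :
    v ∈ Dset G Y S ↔ ∃ h : v ∈ {x : V | x ∉ S},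
      ∀ w : {x : V | x ∉ S}, (G.induce {x : V | x ∉ S}).Reachable ⟨v, h⟩ w → (w : V) ∈ Y := by
  simp [Dset]

lemma Amem_iff {J : Finset V} :
    Amem G Y J ↔ ∀ u : {v : V | v ∉ J}, ∃ w : {v : V | v ∉ J},
      (G.induce {v : V | v ∉ J}).Reachable u w ∧ (w : V) ∉ Y := by
  constructor
  · intro h u
    have := h (SimpleGraph.connectedComponentMk _ u)
    push_neg at this
    obtain ⟨w, hw, hwY⟩ := this
    rw [SimpleGraph.ConnectedComponent.mem_supp_iff, SimpleGraph.ConnectedComponent.eq] at hw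
    exact ⟨w, hw.symm, hwY⟩
  · intro h C
    obtain ⟨u, hu⟩ := C.exists_rep
    have hu' : (G.induce {v : V | v ∉ J}).connectedComponentMk u = C := hu
    obtain ⟨w, hr, hwY⟩ := h u
    intro hall
    exact hwY (hall w (by
      rw [SimpleGraph.ConnectedComponent.mem_supp_iff, ← hu', SimpleGraph.ConnectedComponent.eq]
      exact hr.symm))

/-- transfer reachability along a monotone inclusion of induced subgraphs -/
lemma reach_mono {s t : Set V} (hst : s ⊆ t) {a b : s}
    (h : (G.induce s).Reachable a b) :
    (G.induce t).Reachable ⟨a, hst a.2⟩ ⟨b, hst b.2⟩ := by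
  obtain ⟨p⟩ := h
  induction p with
  | nil => exact SimpleGraph.Reachable.refl _
  | @cons u v w huv _ ih =>
      have : (G.induce t).Adj ⟨u, hst u.2⟩ ⟨v, hst v.2⟩ := by
        simpa using (by simpa using huv : G.Adj (u : V) (v : V))
      exact this.reachable.trans ih

/-- a predicate closed under adjacency propagates along reachability -/
lemma walk_closed {s : Set V} (P : V → Prop)
    (hP : ∀ a b : s, (G.induce s).Adj a b → P a → P b) {a b : s}
    (h : (G.induce s).Reachable a b) (ha : P a) : P b := by
  obtain ⟨p⟩ := h
  induction p with
  | nil => exact ha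
  | @cons u v w huv _ ih => exact ih (hP u v huv ha)

/-- restrict reachability to an adjacency-closed subset -/
lemma reach_restrict {s t : Set V} (hts : t ⊆ s)
    (hcl : ∀ a b : s, (G.induce s).Adj a b → (a : V) ∈ t → (b : V) ∈ t)
    {a b : s} (h : (G.induce s).Reachable a b) (ha : (a : V) ∈ t) :
    ∃ hb : (b : V) ∈ t, (G.induce t).Reachable ⟨a, ha⟩ ⟨b, hb⟩ := by
  obtain ⟨p⟩ := h
  induction p with
  | nil => exact ⟨ha, SimpleGraph.Reachable.refl _⟩
  | @cons u v w huv _ ih =>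
      have hv : (v : V) ∈ t := hcl u v huv ha
      obtain ⟨hb, hr⟩ := ih hv
      refine ⟨hb, SimpleGraph.Adj.reachable ?_ |>.trans hr⟩
      simpa using (by simpa using huv : G.Adj (u : V) (v : V))

/-- `Dset` is closed under reachability. -/
lemma Dset_closed {S : Finset V} {a b : {x : V | x ∉ S}}
    (h : (G.induce {x : V | x ∉ S}).Reachable a b) (hb : (b : V) ∈ Dset G Y S) :
    (a : V) ∈ Dset G Y S := by
  rw [mem_Dset] at hb ⊢
  obtain ⟨h1, h2⟩ := hb
  refine ⟨a.2, fun w hw => h2 w ?_⟩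
  have : (⟨(b : V), h1⟩ : {x : V | x ∉ S}) = b := Subtype.ext rfl
  rw [this]
  exact (h.symm.trans hw)

lemma subset_Phi (S : Finset V) : S ⊆ Phi G Y S := subset_union_left

lemma Phi_sdiff_subset (S : Finset V) : Phi G Y S \ Bset G Y (Phi G Y S) ⊆ S := by
  intro v hv
  rw [mem_sdiff] at hv
  by_contra hvS
  apply hv.2
  have hvD : v ∈ Dset G Y S := by
    rcases mem_union.mp hv.1 with h | h
    · exact absurd h hvS
    · exact h
  rw [mem_Dset] at hvD
  obtain ⟨hvS', hall⟩ := hvD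
  rw [mem_Bset]
  refine ⟨hall ⟨v, hvS'⟩ (SimpleGraph.Reachable.refl _), hv.1, fun j hadj => ?_⟩
  by_cases hjS : j ∈ S
  · exact mem_union_left _ hjS
  · refine mem_union_right _ ?_
    rw [mem_Dset]
    refine ⟨hjS, fun w hw => hall w ?_⟩
    have hadj' : (G.induce {x : V | x ∉ S}).Adj ⟨v, hvS'⟩ ⟨j, hjS⟩ := by simpa using hadj
    exact hadj'.reachable.trans hw

lemma Dset_compl_closed (S : Finset V) :
    ∀ a b : {x : V | x ∉ S}, (G.induce {x : V | x ∉ S}).Adj a b →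
      (a : V) ∈ {x : V | x ∉ Phi G Y S} → (b : V) ∈ {x : V | x ∉ Phi G Y S} := by
  intro a b hab ha
  simp only [Set.mem_setOf_eq, Phi, mem_union, not_or] at ha ⊢
  exact ⟨b.2, fun hbD => ha.2 (Dset_closed G Y hab.reachable hbD)⟩

lemma Phi_memA (S : Finset V) : Amem G Y (Phi G Y S) := by
  rw [Amem_iff]
  intro u
  have huS : (u : V) ∉ S := fun h => u.2 (mem_union_left _ h)
  have huD : (u : V) ∉ Dset G Y S := fun h => u.2 (mem_union_right _ h)
  rw [mem_Dset] at huD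
  push_neg at huD
  obtain ⟨w, hw, hwY⟩ := huD huS
  have hsub : {x : V | x ∉ Phi G Y S} ⊆ {x : V | x ∉ S} := by
    intro x hx hxS
    exact hx (mem_union_left _ hxS)
  obtain ⟨hb, hr⟩ := reach_restrict G (t := {x : V | x ∉ Phi G Y S}) hsub
    (Dset_compl_closed G Y S) hw u.2
  refine ⟨⟨(w : V), hb⟩, ?_, hwY⟩
  have : (⟨(u : V), u.2⟩ : {x : V | x ∉ Phi G Y S}) = u := Subtype.ext rfl
  rwa [this] at hr

/-- Uniqueness: `Φ S` is the unique `J ∈ A` with `J \ B J ⊆ S ⊆ J`. -/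
lemma Phi_eq {J S : Finset V} (hA : Amem G Y J)
    (h1 : J \ Bset G Y J ⊆ S) (h2 : S ⊆ J) : Phi G Y S = J := by
  have hJS : ∀ v ∈ J, v ∉ S → v ∈ Bset G Y J := by
    intro v hv hvS
    by_contra hvB
    exact hvS (h1 (mem_sdiff.mpr ⟨hv, hvB⟩))
  apply Finset.Subset.antisymm
  · intro v hv
    rcases mem_union.mp hv with h | h
    · exact h2 h
    · rw [mem_Dset] at h
      obtain ⟨hvS, hall⟩ := h
      by_contra hvJ
      rw [Amem_iff] at hA
      obtain ⟨w, hr, hwY⟩ := hA ⟨v, hvJ⟩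
      have hsub : {x : V | x ∉ J} ⊆ {x : V | x ∉ S} := fun x hx hxS => hx (h2 hxS)
      have := reach_mono G hsub hr
      exact hwY (hall _ this)
  · intro v hv
    by_cases hvS : v ∈ S
    · exact mem_union_left _ hvS
    · refine mem_union_right _ ?_
      rw [mem_Dset]
      refine ⟨hvS, fun w hw => ?_⟩
      have key : (w : V) ∈ J := by
        refine walk_closed G (s := {x : V | x ∉ S}) (fun x => x ∈ J) ?_ hw hv
        intro a b hab haJ
        have haB := hJS a haJ a.2
        rw [mem_Bset] at haB
        exact haB.2.2 b (by simpa using hab)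
      have := hJS _ key w.2
      rw [mem_Bset] at this
      exact this.1

lemma pow_card_eq {V : Type*} [DecidableEq V] (B : Finset V) :
    (X : Polynomial ℤ) ^ B.card = ∑ T ∈ B.powerset, (X - 1 : Polynomial ℤ) ^ T.card := by
  have h := Finset.prod_add (fun _ : V => (X - 1 : Polynomial ℤ)) (fun _ => 1) B
  simpa using h

lemma interval_sum {V : Type*} [DecidableEq V] (J B : Finset V) (hBJ : B ⊆ J) :
    (X - 1 : Polynomial ℤ) ^ (J \ B).card * X ^ B.card
      = ∑ S ∈ J.powerset.filter (fun S => J \ B ⊆ S), (X - 1 : Polynomial ℤ) ^ S.card := by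
  rw [pow_card_eq, Finset.mul_sum]
  refine Finset.sum_nbij' (i := fun T => (J \ B) ∪ T) (j := fun S => S ∩ B) ?_ ?_ ?_ ?_ ?_
  · intro T hT
    rw [mem_powerset] at hT
    rw [mem_filter, mem_powerset]
    exact ⟨union_subset sdiff_subset (hT.trans hBJ), subset_union_left⟩
  · intro S hS
    rw [mem_powerset]
    exact inter_subset_right
  · intro T hT
    rw [mem_powerset] at hT
    show (J \ B ∪ T) ∩ B = T
    rw [union_inter_distrib_right, inter_eq_left.mpr hT,
      Finset.disjoint_iff_inter_eq_empty.mp sdiff_disjoint, empty_union]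
  · intro S hS
    rw [mem_filter, mem_powerset] at hS
    show J \ B ∪ S ∩ B = S
    ext x
    simp only [mem_union, mem_sdiff, mem_inter]
    constructor
    · rintro (⟨h1, h2⟩ | ⟨h1, _⟩)
      · exact hS.2 (mem_sdiff.mpr ⟨h1, h2⟩)
      · exact h1
    · intro hx
      by_cases hxB : x ∈ B
      · exact Or.inr ⟨hx, hxB⟩
      · exact Or.inl ⟨hS.1 hx, hxB⟩
  · intro T hT
    rw [mem_powerset] at hT
    show _ = (X - 1 : Polynomial ℤ) ^ (J \ B ∪ T).card
    rw [← pow_add, card_union_of_disjoint (sdiff_disjoint.mono_right hT)]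

end Stmt0Aux

open Classical in
/-- Graph-theoretic identity: for a finite graph `G` on `V` and `Y ⊆ V`,
`∑_{J ∈ A(Y,X)} (q−1)^{#(J − (Y ∩ J°))} q^{#(Y ∩ J°)} = q^{#V}` in `ℤ[q]`, where
`J°` is the set of vertices of `J` with no neighbors outside `J`, and `A(Y,X)` is
the set of `J` such that no connected component of the induced graph on the
complement of `J` is contained in `Y`. -/
theorem stmt0 {V : Type*} [Fintype V] [DecidableEq V] (G : SimpleGraph V)
    (Y : Finset V) :
    ∑ J ∈ Finset.univ.powerset.filter (fun J : Finset V =>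
        ∀ C : (G.induce {v : V | v ∉ J}).ConnectedComponent,
          ¬ ∀ v ∈ C.supp, (↑v : V) ∈ Y),
      (((Polynomial.X : Polynomial ℤ) - 1) ^
            (J \ (Y ∩ J.filter fun i => ∀ j, G.Adj i j → j ∈ J)).card *
          (Polynomial.X : Polynomial ℤ) ^
            (Y ∩ J.filter fun i => ∀ j, G.Adj i j → j ∈ J).card)
      = (Polynomial.X : Polynomial ℤ) ^ Fintype.card V := by
  classical
  set A := Finset.univ.powerset.filter (fun J : Finset V => Stmt0Aux.Amem G Y J) with hA
  have hBeq : ∀ J : Finset V,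
      (Y ∩ J.filter fun i => ∀ j, G.Adj i j → j ∈ J) = Stmt0Aux.Bset G Y J := by
    intro J
    ext x
    simp [Stmt0Aux.Bset, Finset.mem_filter, Finset.mem_inter]
  have hAeq : (Finset.univ.powerset.filter (fun J : Finset V =>
      ∀ C : (G.induce {v : V | v ∉ J}).ConnectedComponent,
        ¬ ∀ v ∈ C.supp, (↑v : V) ∈ Y)) = A := by
    rw [hA]
    ext J
    simp only [Finset.mem_filter]
    exact and_congr_right fun _ => Iff.rfl
  rw [hAeq]
  simp only [hBeq]
  set I : Finset V → Finset (Finset V) :=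
    fun J => J.powerset.filter (fun S => J \ Stmt0Aux.Bset G Y J ⊆ S) with hI
  have hmemA : ∀ J, J ∈ A ↔ Stmt0Aux.Amem G Y J := by
    intro J
    simp [hA, Finset.mem_filter]
  have step1 : ∀ J ∈ A,
      ((Polynomial.X - 1 : Polynomial ℤ) ^ (J \ Stmt0Aux.Bset G Y J).card *
        Polynomial.X ^ (Stmt0Aux.Bset G Y J).card)
      = ∑ S ∈ I J, (Polynomial.X - 1 : Polynomial ℤ) ^ S.card := by
    intro J _
    exact Stmt0Aux.interval_sum J (Stmt0Aux.Bset G Y J) (Stmt0Aux.Bset_subset G Y J)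
  rw [Finset.sum_congr rfl step1]
  have hdisj : (↑A : Set (Finset V)).PairwiseDisjoint I := by
    intro J hJ J' hJ' hne
    rw [Function.onFun]
    rw [Finset.disjoint_left]
    intro S hS hS'
    rw [hI] at hS hS'
    simp only [Finset.mem_filter, Finset.mem_powerset] at hS hS'
    apply hne
    rw [← Stmt0Aux.Phi_eq G Y ((hmemA J).mp hJ) hS.2 hS.1,
      ← Stmt0Aux.Phi_eq G Y ((hmemA J').mp hJ') hS'.2 hS'.1]
  rw [← Finset.sum_biUnion hdisj]
  have hUnion : A.biUnion I = Finset.univ.powerset := by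
    ext S
    simp only [Finset.mem_biUnion, Finset.mem_powerset]
    constructor
    · intro _
      exact Finset.subset_univ S
    · intro _
      refine ⟨Stmt0Aux.Phi G Y S, (hmemA _).mpr (Stmt0Aux.Phi_memA G Y S), ?_⟩
      rw [hI]
      simp only [Finset.mem_filter, Finset.mem_powerset]
      exact ⟨Stmt0Aux.subset_Phi G Y S, Stmt0Aux.Phi_sdiff_subset G Y S⟩
  rw [hUnion, ← Stmt0Aux.pow_card_eq, Finset.card_univ]
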